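/- Compression does not decrease spectral irregularity: let G be a finite simple graph on n ≥ 1 vertices, let u and v be distinct vertices of G, and let G' = G_{u→v} be the compression of G from u to v. Then ε(G') ≥ ε(G), where ε denotes the spectral irregularity; equivalently, since G and G' have the same numbers of vertices and edges and hence the same average degree, the largest eigenvalue of the adjacency matrix of G' is at least the largest eigenvalue of the adjacency matrix of G. -/

import Mathlib

/-- The compression `G_{u→v}` of the simple graph `G` from vertex `u` to vertex `v`:
for each vertex `x` adjacent to `u` but neither adjacent nor equal to `v`, the edge
`{x, u}` is deleted and the edge `{x, v}` is added. -/
def SimpleGraph.compress {V : Type*} [DecidableEq V] (G : SimpleGraph V) (u v : V) :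
    SimpleGraph V where
  Adj x y :=
    (G.Adj x y ∧ ¬(x = u ∧ G.Adj u y ∧ ¬G.Adj v y ∧ y ≠ v) ∧
      ¬(y = u ∧ G.Adj u x ∧ ¬G.Adj v x ∧ x ≠ v)) ∨
    (x = v ∧ G.Adj u y ∧ ¬G.Adj v y ∧ y ≠ v) ∨
    (y = v ∧ G.Adj u x ∧ ¬G.Adj v x ∧ x ≠ v)
  symm := ⟨fun x y h => by
    rcases h with ⟨h1, h2, h3⟩ | h | h
    · exact Or.inl ⟨h1.symm, h3, h2⟩
    · exact Or.inr (Or.inr h)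
    · exact Or.inr (Or.inl h)⟩
  loopless := ⟨fun x => by
    rintro (⟨h, -, -⟩ | ⟨rfl, -, -, h⟩ | ⟨rfl, -, -, h⟩)
    · exact G.irrefl h
    · exact h rfl
    · exact h rfl⟩

instance {V : Type*} [DecidableEq V] (G : SimpleGraph V) [DecidableRel G.Adj] (u v : V) :
    DecidableRel (G.compress u v).Adj := fun x y => by
  dsimp only [SimpleGraph.compress]; infer_instance

/-- The largest eigenvalue `λ₁(G)` of the (real) adjacency matrix of `G`. -/
noncomputable def SimpleGraph.lambdaOne {V : Type*} [Fintype V] [DecidableEq V]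
    (G : SimpleGraph V) [DecidableRel G.Adj] : ℝ :=
  sSup (spectrum ℝ (G.adjMatrix ℝ))

/-- The spectral irregularity `ε(G) = λ₁(G) − d̄(G)`, where `λ₁(G)` is the largest
eigenvalue of the adjacency matrix of `G` and `d̄(G)` is the average vertex degree. -/
noncomputable def SimpleGraph.spectralIrregularity {V : Type*} [Fintype V] [DecidableEq V]
    (G : SimpleGraph V) [DecidableRel G.Adj] : ℝ :=
  G.lambdaOne - (∑ w, (G.degree w : ℝ)) / (Fintype.card V : ℝ)


section CompressAux

set_option linter.unusedSectionVars false

open Matrix Finset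

section SpecAux

variable {n : Type*} [Fintype n] [DecidableEq n]

lemma vecMul_unitary_eq {U : Matrix n n ℝ} (z : n → ℝ) :
    z ᵥ* U = star U *ᵥ z := by
  ext j
  simp [Matrix.vecMul, Matrix.mulVec, dotProduct, Matrix.star_apply, mul_comm]

lemma rayleigh_le_sSup [Nonempty n] {A : Matrix n n ℝ} (hA : A.IsHermitian) (z : n → ℝ) :
    z ⬝ᵥ (A *ᵥ z) ≤ sSup (spectrum ℝ A) * (z ⬝ᵥ z) := by
  set μ := sSup (spectrum ℝ A) with hμ
  have hbdd : BddAbove (spectrum ℝ A) := by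
    rw [hA.spectrum_real_eq_range_eigenvalues]
    exact (Set.finite_range _).bddAbove
  have hle : ∀ i, hA.eigenvalues i ≤ μ := fun i =>
    le_csSup hbdd (hA.eigenvalues_mem_spectrum_real i)
  set U : Matrix n n ℝ := (hA.eigenvectorUnitary : Matrix n n ℝ) with hU
  have hUu : U * star U = 1 := Matrix.mem_unitaryGroup_iff.mp hA.eigenvectorUnitary.2
  set w : n → ℝ := star U *ᵥ z with hw
  have hofReal : (RCLike.ofReal ∘ hA.eigenvalues : n → ℝ) = hA.eigenvalues := by
    ext i; simp
  have h1 : z ⬝ᵥ (A *ᵥ z) = w ⬝ᵥ (diagonal hA.eigenvalues *ᵥ w) := by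
    conv_lhs => rw [hA.spectral_theorem, hofReal, Unitary.conjStarAlgAut_apply]
    rw [← Matrix.mulVec_mulVec, ← Matrix.mulVec_mulVec, Matrix.dotProduct_mulVec,
      vecMul_unitary_eq]
  have h2 : w ⬝ᵥ w = z ⬝ᵥ z := by
    rw [hw, Matrix.dotProduct_mulVec _ (star U) z, vecMul_unitary_eq, star_star,
      Matrix.mulVec_mulVec, hUu, Matrix.one_mulVec]
  rw [h1, ← h2]
  have : w ⬝ᵥ (diagonal hA.eigenvalues *ᵥ w) = ∑ j, hA.eigenvalues j * (w j * w j) := by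
    simp [dotProduct, Matrix.mulVec_diagonal]
    exact Finset.sum_congr rfl fun j _ => by ring
  rw [this, dotProduct, Finset.mul_sum]
  exact Finset.sum_le_sum fun j _ =>
    mul_le_mul_of_nonneg_right (hle j) (mul_self_nonneg _)

lemma exists_max_eigvec [Nonempty n] {A : Matrix n n ℝ} (hA : A.IsHermitian) :
    ∃ x : n → ℝ, x ≠ 0 ∧ A *ᵥ x = sSup (spectrum ℝ A) • x := by
  obtain ⟨i, hi⟩ : ∃ i, hA.eigenvalues i = sSup (spectrum ℝ A) := by
    have h := hA.spectrum_real_eq_range_eigenvalues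
    have hmem : sSup (spectrum ℝ A) ∈ spectrum ℝ A := by
      rw [h]
      exact Set.Nonempty.csSup_mem (Set.range_nonempty _) (Set.finite_range _)
    rw [h] at hmem ⊢
    exact Set.mem_range.mp hmem
  refine ⟨⇑(hA.eigenvectorBasis i), ?_, ?_⟩
  · have := hA.eigenvectorBasis.orthonormal.ne_zero i
    intro h
    apply this
    ext j
    exact congrFun h j
  · rw [hA.mulVec_eigenvectorBasis, hi]

end SpecAux

variable {V : Type*} [Fintype V] [DecidableEq V]

lemma compress_adj (G : SimpleGraph V) (u v x y : V) :
    (G.compress u v).Adj x y ↔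
      ((G.Adj x y ∧ ¬(x = u ∧ G.Adj u y ∧ ¬G.Adj v y ∧ y ≠ v) ∧
        ¬(y = u ∧ G.Adj u x ∧ ¬G.Adj v x ∧ x ≠ v)) ∨
      (x = v ∧ G.Adj u y ∧ ¬G.Adj v y ∧ y ≠ v) ∨
      (y = v ∧ G.Adj u x ∧ ¬G.Adj v x ∧ x ≠ v)) := Iff.rfl

set_option maxHeartbeats 1000000 in
lemma compress_entry (G : SimpleGraph V) [DecidableRel G.Adj] (u v : V) (huv : u ≠ v)
    (a b : V) :
    (G.compress u v).adjMatrix ℝ a b =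
      G.adjMatrix ℝ a b
        - (if a = u then (1:ℝ) else 0) * (if G.Adj u b ∧ ¬G.Adj v b ∧ b ≠ v then (1:ℝ) else 0)
        - (if b = u then (1:ℝ) else 0) * (if G.Adj u a ∧ ¬G.Adj v a ∧ a ≠ v then (1:ℝ) else 0)
        + (if a = v then (1:ℝ) else 0) * (if G.Adj u b ∧ ¬G.Adj v b ∧ b ≠ v then (1:ℝ) else 0)
        + (if b = v then (1:ℝ) else 0) * (if G.Adj u a ∧ ¬G.Adj v a ∧ a ≠ v then (1:ℝ) else 0) := by
  by_cases h1 : a = u ∧ G.Adj u b ∧ ¬G.Adj v b ∧ b ≠ v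
  · obtain ⟨ha, hub, hvb, hbv⟩ := id h1
    have hbu : b ≠ u := fun h => G.irrefl (h ▸ hub)
    have h2 : ¬(b = u ∧ G.Adj u a ∧ ¬G.Adj v a ∧ a ≠ v) := fun h => hbu h.1
    have h3 : a ≠ v := fun h => huv (ha.symm.trans h)
    have hadj : G.Adj a b := ha ▸ hub
    simp [SimpleGraph.adjMatrix_apply, compress_adj, h1, h2, h3, ha, hbv, hadj, hub, hvb]
  · by_cases h2 : b = u ∧ G.Adj u a ∧ ¬G.Adj v a ∧ a ≠ v
    · obtain ⟨hb, hua, hva, hav⟩ := id h2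
      have hau : a ≠ u := fun h => G.irrefl (h ▸ hua)
      have hbv : b ≠ v := fun h => huv (hb.symm.trans h)
      have hadj : G.Adj a b := hb ▸ hua.symm
      simp [SimpleGraph.adjMatrix_apply, compress_adj, h1, h2, hau, hav, hbv, hadj, hua, hua.symm, hva, hb, huv, huv.symm]
    · by_cases h3 : a = v ∧ G.Adj u b ∧ ¬G.Adj v b ∧ b ≠ v
      · obtain ⟨ha, hub, hvb, hbv⟩ := id h3
        have hadj : ¬ G.Adj a b := ha ▸ hvb
        have h4 : ¬(b = v ∧ G.Adj u a ∧ ¬G.Adj v a ∧ a ≠ v) := fun h => hbv h.1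
        have hau : a ≠ u := fun h => huv (h.symm.trans ha)
        simp [SimpleGraph.adjMatrix_apply, compress_adj, h1, h2, h3, h4, ha, hau, hadj, hub, hvb, hbv, huv, huv.symm]
      · by_cases h4 : b = v ∧ G.Adj u a ∧ ¬G.Adj v a ∧ a ≠ v
        · obtain ⟨hb, hua, hva, hav⟩ := id h4
          have hadj : ¬ G.Adj a b := fun h => hva (hb ▸ h).symm
          have hbu : b ≠ u := fun h => huv (h.symm.trans hb)
          have hav2 : ¬ G.Adj a v := by rw [← hb]; exact hadj
          simp [SimpleGraph.adjMatrix_apply, compress_adj, h1, h2, h3, h4, hb, hbu, hadj, hav2, hua, hva, hav, huv, huv.symm]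
        · have hiff : (G.compress u v).Adj a b ↔ G.Adj a b := by
            rw [compress_adj]
            constructor
            · rintro (⟨h, -, -⟩ | h | h)
              · exact h
              · exact absurd h h3
              · exact absurd h h4
            · intro h
              exact Or.inl ⟨h, h1, h2⟩
          have e1 : (if a = u then (1:ℝ) else 0) * (if G.Adj u b ∧ ¬G.Adj v b ∧ b ≠ v then (1:ℝ) else 0) = 0 := by
            by_cases hq : G.Adj u b ∧ ¬G.Adj v b ∧ b ≠ v
            · have : a ≠ u := fun hp => h1 ⟨hp, hq⟩
              simp [this]
            · simp [hq]
          have e2 : (if b = u then (1:ℝ) else 0) * (if G.Adj u a ∧ ¬G.Adj v a ∧ a ≠ v then (1:ℝ) else 0) = 0 := by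
            by_cases hq : G.Adj u a ∧ ¬G.Adj v a ∧ a ≠ v
            · have : b ≠ u := fun hp => h2 ⟨hp, hq⟩
              simp [this]
            · simp [hq]
          have e3 : (if a = v then (1:ℝ) else 0) * (if G.Adj u b ∧ ¬G.Adj v b ∧ b ≠ v then (1:ℝ) else 0) = 0 := by
            by_cases hq : G.Adj u b ∧ ¬G.Adj v b ∧ b ≠ v
            · have : a ≠ v := fun hp => h3 ⟨hp, hq⟩
              simp [this]
            · simp [hq]
          have e4 : (if b = v then (1:ℝ) else 0) * (if G.Adj u a ∧ ¬G.Adj v a ∧ a ≠ v then (1:ℝ) else 0) = 0 := by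
            by_cases hq : G.Adj u a ∧ ¬G.Adj v a ∧ a ≠ v
            · have : b ≠ v := fun hp => h4 ⟨hp, hq⟩
              simp [this]
            · simp [hq]
          rw [e1, e2, e3, e4]
          simp only [SimpleGraph.adjMatrix_apply, hiff]
          ring

lemma swap_entry (G : SimpleGraph V) [DecidableRel G.Adj] (u v : V) (huv : u ≠ v) (a b : V) :
    G.adjMatrix ℝ (Equiv.swap u v a) (Equiv.swap u v b) =
      G.adjMatrix ℝ a b
        + (if a = u then (1:ℝ) else 0) *
            ((if G.Adj v b ∧ b ≠ u then (1:ℝ) else 0) - (if G.Adj u b ∧ b ≠ v then (1:ℝ) else 0))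
        - (if a = v then (1:ℝ) else 0) *
            ((if G.Adj v b ∧ b ≠ u then (1:ℝ) else 0) - (if G.Adj u b ∧ b ≠ v then (1:ℝ) else 0))
        + (if b = u then (1:ℝ) else 0) *
            ((if G.Adj v a ∧ a ≠ u then (1:ℝ) else 0) - (if G.Adj u a ∧ a ≠ v then (1:ℝ) else 0))
        - (if b = v then (1:ℝ) else 0) *
            ((if G.Adj v a ∧ a ≠ u then (1:ℝ) else 0) - (if G.Adj u a ∧ a ≠ v then (1:ℝ) else 0)) := by
  by_cases hau : a = u
  · by_cases hbu : b = u
    · simp [hau, hbu, Equiv.swap_apply_left, huv, huv.symm, G.irrefl]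
    · by_cases hbv : b = v
      · simp [hau, hbv, Equiv.swap_apply_left, Equiv.swap_apply_right, huv, huv.symm,
          G.irrefl, G.adj_comm u v]
      · simp only [hau, Equiv.swap_apply_left, Equiv.swap_apply_of_ne_of_ne hbu hbv,
          SimpleGraph.adjMatrix_apply]
        simp [hbu, hbv, huv, huv.symm]
        try ring
  · by_cases hav : a = v
    · by_cases hbu : b = u
      · simp [hav, hbu, Equiv.swap_apply_left, Equiv.swap_apply_right, huv, huv.symm,
          G.irrefl, G.adj_comm v u]
      · by_cases hbv : b = v
        · simp [hav, hbv, Equiv.swap_apply_right, huv, huv.symm, G.irrefl]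
        · simp only [hav, Equiv.swap_apply_right, Equiv.swap_apply_of_ne_of_ne hbu hbv,
            SimpleGraph.adjMatrix_apply]
          simp [hbu, hbv, huv, huv.symm]
          try ring
    · by_cases hbu : b = u
      · simp only [hbu, Equiv.swap_apply_left, Equiv.swap_apply_of_ne_of_ne hau hav,
          SimpleGraph.adjMatrix_apply]
        simp [hau, hav, huv, huv.symm, G.adj_comm a v, G.adj_comm a u]
        try ring
      · by_cases hbv : b = v
        · simp only [hbv, Equiv.swap_apply_right, Equiv.swap_apply_of_ne_of_ne hau hav,
            SimpleGraph.adjMatrix_apply]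
          simp [hau, hav, huv, huv.symm, G.adj_comm a u, G.adj_comm a v]
          try ring
        · simp only [Equiv.swap_apply_of_ne_of_ne hau hav, Equiv.swap_apply_of_ne_of_ne hbu hbv,
            SimpleGraph.adjMatrix_apply]
          simp [hau, hav, hbu, hbv]

lemma expand_quad (M : Matrix V V ℝ) (w : V → ℝ) :
    w ⬝ᵥ (M *ᵥ w) = ∑ a, ∑ b, w a * (M a b * w b) := by
  simp [dotProduct, Matrix.mulVec, Finset.mul_sum]

lemma dsum_left (c : V) (g w : V → ℝ) :
    ∑ a, ∑ b, w a * ((if a = c then (1:ℝ) else 0) * g b * w b) = w c * ∑ b, g b * w b := by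
  rw [Finset.sum_eq_single c]
  · rw [Finset.mul_sum]
    exact Finset.sum_congr rfl fun b _ => by rw [if_pos rfl]; ring
  · intro a _ hac
    simp [hac]
  · intro h
    exact absurd (Finset.mem_univ c) h

lemma dsum_right (c : V) (g w : V → ℝ) :
    ∑ a, ∑ b, w a * ((if b = c then (1:ℝ) else 0) * g a * w b) = w c * ∑ a, g a * w a := by
  rw [Finset.sum_comm, Finset.sum_eq_single c]
  · rw [Finset.mul_sum]
    exact Finset.sum_congr rfl fun a _ => by rw [if_pos rfl]; ring
  · intro b _ hbc
    simp [hbc]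
  · intro h
    exact absurd (Finset.mem_univ c) h

lemma sum_ind_mul (P : V → Prop) [DecidablePred P] (w : V → ℝ) :
    ∑ b, (if P b then (1:ℝ) else 0) * w b = ∑ b ∈ Finset.univ.filter P, w b := by
  rw [Finset.sum_filter]
  exact Finset.sum_congr rfl fun b _ => by split_ifs <;> simp

lemma compress_quadform (G : SimpleGraph V) [DecidableRel G.Adj] (u v : V) (huv : u ≠ v)
    (w : V → ℝ) :
    w ⬝ᵥ ((G.compress u v).adjMatrix ℝ *ᵥ w) =
      w ⬝ᵥ (G.adjMatrix ℝ *ᵥ w) + 2 * (w v - w u) *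
        ∑ b ∈ Finset.univ.filter (fun b => G.Adj u b ∧ ¬G.Adj v b ∧ b ≠ v), w b := by
  set s : V → ℝ := fun x => if G.Adj u x ∧ ¬G.Adj v x ∧ x ≠ v then (1:ℝ) else 0 with hs
  have key : ∀ a b, w a * ((G.compress u v).adjMatrix ℝ a b * w b)
      = w a * (G.adjMatrix ℝ a b * w b)
        - w a * ((if a = u then (1:ℝ) else 0) * s b * w b)
        - w a * ((if b = u then (1:ℝ) else 0) * s a * w b)
        + w a * ((if a = v then (1:ℝ) else 0) * s b * w b)
        + w a * ((if b = v then (1:ℝ) else 0) * s a * w b) := by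
    intro a b
    rw [compress_entry G u v huv a b]
    simp only [hs]
    ring
  have hsum : ∑ b, s b * w b
      = ∑ b ∈ Finset.univ.filter (fun b => G.Adj u b ∧ ¬G.Adj v b ∧ b ≠ v), w b := by
    simp only [hs]
    exact sum_ind_mul _ w
  rw [expand_quad, expand_quad]
  calc ∑ a, ∑ b, w a * ((G.compress u v).adjMatrix ℝ a b * w b)
      = ∑ a, ∑ b, (w a * (G.adjMatrix ℝ a b * w b)
          - w a * ((if a = u then (1:ℝ) else 0) * s b * w b)
          - w a * ((if b = u then (1:ℝ) else 0) * s a * w b)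
          + w a * ((if a = v then (1:ℝ) else 0) * s b * w b)
          + w a * ((if b = v then (1:ℝ) else 0) * s a * w b)) :=
        Finset.sum_congr rfl fun a _ => Finset.sum_congr rfl fun b _ => key a b
    _ = (∑ a, ∑ b, w a * (G.adjMatrix ℝ a b * w b))
          - (∑ a, ∑ b, w a * ((if a = u then (1:ℝ) else 0) * s b * w b))
          - (∑ a, ∑ b, w a * ((if b = u then (1:ℝ) else 0) * s a * w b))
          + (∑ a, ∑ b, w a * ((if a = v then (1:ℝ) else 0) * s b * w b))
          + (∑ a, ∑ b, w a * ((if b = v then (1:ℝ) else 0) * s a * w b)) := by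
        simp [Finset.sum_add_distrib, Finset.sum_sub_distrib]
    _ = (∑ a, ∑ b, w a * (G.adjMatrix ℝ a b * w b)) + 2 * (w v - w u) *
          ∑ b ∈ Finset.univ.filter (fun b => G.Adj u b ∧ ¬G.Adj v b ∧ b ≠ v), w b := by
        rw [dsum_left u s w, dsum_right u s w, dsum_left v s w, dsum_right v s w, hsum]
        ring

lemma quadform_swap (G : SimpleGraph V) [DecidableRel G.Adj] (u v : V) (huv : u ≠ v)
    (y : V → ℝ) :
    (fun a => y (Equiv.swap u v a)) ⬝ᵥ (G.adjMatrix ℝ *ᵥ fun a => y (Equiv.swap u v a)) =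
      y ⬝ᵥ (G.adjMatrix ℝ *ᵥ y) + 2 * (y u - y v) *
        ((∑ b ∈ Finset.univ.filter (fun b => G.Adj v b ∧ b ≠ u), y b) -
         (∑ b ∈ Finset.univ.filter (fun b => G.Adj u b ∧ b ≠ v), y b)) := by
  set g : V → ℝ := fun x =>
    (if G.Adj v x ∧ x ≠ u then (1:ℝ) else 0) - (if G.Adj u x ∧ x ≠ v then (1:ℝ) else 0) with hg
  have hgsum : ∑ b, g b * y b
      = (∑ b ∈ Finset.univ.filter (fun b => G.Adj v b ∧ b ≠ u), y b)
        - (∑ b ∈ Finset.univ.filter (fun b => G.Adj u b ∧ b ≠ v), y b) := by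
    simp only [hg, sub_mul]
    rw [Finset.sum_sub_distrib, sum_ind_mul, sum_ind_mul]
  rw [expand_quad, expand_quad]
  calc ∑ a, ∑ b, y (Equiv.swap u v a) * (G.adjMatrix ℝ a b * y (Equiv.swap u v b))
      = ∑ a, ∑ b, y (Equiv.swap u v a) * (G.adjMatrix ℝ a (Equiv.swap u v b) * y b) := by
        refine Finset.sum_congr rfl fun a _ => ?_
        rw [← Equiv.sum_comp (Equiv.swap u v)
          (fun b => y (Equiv.swap u v a) * (G.adjMatrix ℝ a (Equiv.swap u v b) * y b))]
        exact Finset.sum_congr rfl fun b _ => by rw [Equiv.swap_apply_self]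
    _ = ∑ a, ∑ b, y a * (G.adjMatrix ℝ (Equiv.swap u v a) (Equiv.swap u v b) * y b) := by
        rw [← Equiv.sum_comp (Equiv.swap u v)
          (fun a => ∑ b, y a * (G.adjMatrix ℝ (Equiv.swap u v a) (Equiv.swap u v b) * y b))]
        refine Finset.sum_congr rfl fun a _ => Finset.sum_congr rfl fun b _ => by
          rw [Equiv.swap_apply_self]
    _ = ∑ a, ∑ b, (y a * (G.adjMatrix ℝ a b * y b)
          + y a * ((if a = u then (1:ℝ) else 0) * g b * y b)
          - y a * ((if a = v then (1:ℝ) else 0) * g b * y b)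
          + y a * ((if b = u then (1:ℝ) else 0) * g a * y b)
          - y a * ((if b = v then (1:ℝ) else 0) * g a * y b)) := by
        refine Finset.sum_congr rfl fun a _ => Finset.sum_congr rfl fun b _ => ?_
        rw [swap_entry G u v huv a b]
        simp only [hg]
        ring
    _ = (∑ a, ∑ b, y a * (G.adjMatrix ℝ a b * y b))
          + (∑ a, ∑ b, y a * ((if a = u then (1:ℝ) else 0) * g b * y b))
          - (∑ a, ∑ b, y a * ((if a = v then (1:ℝ) else 0) * g b * y b))
          + (∑ a, ∑ b, y a * ((if b = u then (1:ℝ) else 0) * g a * y b))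
          - (∑ a, ∑ b, y a * ((if b = v then (1:ℝ) else 0) * g a * y b)) := by
        simp [Finset.sum_add_distrib, Finset.sum_sub_distrib]
    _ = (∑ a, ∑ b, y a * (G.adjMatrix ℝ a b * y b)) + 2 * (y u - y v) *
          ((∑ b ∈ Finset.univ.filter (fun b => G.Adj v b ∧ b ≠ u), y b)
            - (∑ b ∈ Finset.univ.filter (fun b => G.Adj u b ∧ b ≠ v), y b)) := by
        rw [dsum_left u g y, dsum_right u g y, dsum_left v g y, dsum_right v g y, hgsum]
        ring


lemma ones_quad (H : SimpleGraph V) [DecidableRel H.Adj] :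
    (fun _ => (1:ℝ)) ⬝ᵥ (H.adjMatrix ℝ *ᵥ (fun _ => (1:ℝ))) = ∑ a, (H.degree a : ℝ) := by
  rw [expand_quad]
  refine Finset.sum_congr rfl fun a _ => ?_
  simp [SimpleGraph.adjMatrix_apply, Finset.sum_boole, SimpleGraph.neighborFinset_eq_filter,
    SimpleGraph.degree]

end CompressAux

open Matrix Finset

/-- Compression does not decrease spectral irregularity: if `G'` is the compression of
`G` from `u` to `v`, then `ε(G') ≥ ε(G)`; equivalently, the largest eigenvalue of the
adjacency matrix of `G'` is at least that of `G`. -/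
theorem compress_spectralIrregularity_ge {V : Type*} [Fintype V] [DecidableEq V]
    (G : SimpleGraph V) [DecidableRel G.Adj] (u v : V) (huv : u ≠ v)
    (hn : 1 ≤ Fintype.card V) :
    (G.compress u v).spectralIrregularity ≥ G.spectralIrregularity ∧
      (G.compress u v).lambdaOne ≥ G.lambdaOne := by
  have hne : Nonempty V := Fintype.card_pos_iff.mp hn
  have hA : (G.adjMatrix ℝ).IsHermitian := by
    rw [Matrix.IsHermitian, Matrix.conjTranspose_eq_transpose_of_trivial]
    exact G.isSymm_adjMatrix
  have hA' : ((G.compress u v).adjMatrix ℝ).IsHermitian := by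
    rw [Matrix.IsHermitian, Matrix.conjTranspose_eq_transpose_of_trivial]
    exact (G.compress u v).isSymm_adjMatrix
  obtain ⟨x, hx0, hxe⟩ := exists_max_eigvec hA
  have hxx : (0:ℝ) < x ⬝ᵥ x := by
    obtain ⟨a, ha⟩ := Function.ne_iff.mp hx0
    refine Finset.sum_pos' (fun i _ => mul_self_nonneg (x i)) ⟨a, Finset.mem_univ a, ?_⟩
    exact mul_self_pos.mpr ha
  have hxq : x ⬝ᵥ (G.adjMatrix ℝ *ᵥ x) = sSup (spectrum ℝ (G.adjMatrix ℝ)) * (x ⬝ᵥ x) := by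
    rw [hxe, dotProduct_smul, smul_eq_mul]
  set μ := sSup (spectrum ℝ (G.adjMatrix ℝ)) with hμ
  set y : V → ℝ := fun a => |x a| with hy
  have hyy : y ⬝ᵥ y = x ⬝ᵥ x := Finset.sum_congr rfl fun a _ => abs_mul_abs_self (x a)
  have hy0 : ∀ a, 0 ≤ y a := fun a => abs_nonneg _
  have hyq : μ * (y ⬝ᵥ y) ≤ y ⬝ᵥ (G.adjMatrix ℝ *ᵥ y) := by
    rw [hyy, ← hxq, expand_quad, expand_quad]
    refine Finset.sum_le_sum fun a _ => Finset.sum_le_sum fun b _ => ?_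
    have hnn : (0:ℝ) ≤ G.adjMatrix ℝ a b := by
      rw [SimpleGraph.adjMatrix_apply]
      split_ifs <;> norm_num
    calc x a * (G.adjMatrix ℝ a b * x b) = G.adjMatrix ℝ a b * (x a * x b) := by ring
      _ ≤ G.adjMatrix ℝ a b * |x a * x b| := mul_le_mul_of_nonneg_left (le_abs_self _) hnn
      _ = y a * (G.adjMatrix ℝ a b * y b) := by rw [abs_mul]; simp only [hy]; ring
  have hyypos : (0:ℝ) < y ⬝ᵥ y := by rw [hyy]; exact hxx
  have main : sSup (spectrum ℝ (G.adjMatrix ℝ))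
      ≤ sSup (spectrum ℝ ((G.compress u v).adjMatrix ℝ)) := by
    rw [← hμ]
    set lam := sSup (spectrum ℝ ((G.compress u v).adjMatrix ℝ)) with hlam
    rcases le_total (y u) (y v) with hc | hc
    · have h1 := compress_quadform G u v huv y
      have h2 := rayleigh_le_sSup hA' y
      rw [← hlam] at h2
      have hS : (0:ℝ) ≤ ∑ b ∈ Finset.univ.filter (fun b => G.Adj u b ∧ ¬G.Adj v b ∧ b ≠ v), y b :=
        Finset.sum_nonneg fun b _ => hy0 b
      have hprod : (0:ℝ) ≤ 2 * (y v - y u) *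
          ∑ b ∈ Finset.univ.filter (fun b => G.Adj u b ∧ ¬G.Adj v b ∧ b ≠ v), y b :=
        mul_nonneg (mul_nonneg (by norm_num) (sub_nonneg.mpr hc)) hS
      have hfin : μ * (y ⬝ᵥ y) ≤ lam * (y ⬝ᵥ y) := by linarith
      exact le_of_mul_le_mul_right hfin hyypos
    · set z : V → ℝ := fun a => y (Equiv.swap u v a) with hz
      have hzz : z ⬝ᵥ z = y ⬝ᵥ y := Equiv.sum_comp (Equiv.swap u v) (fun t => y t * y t)
      have h1 := compress_quadform G u v huv z
      have h2 := quadform_swap G u v huv y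
      rw [← hz] at h2
      have h3 := rayleigh_le_sSup hA' z
      rw [← hlam, hzz] at h3
      have hzv : z v = y u := by rw [hz]; simp
      have hzu : z u = y v := by rw [hz]; simp
      have hzS : ∑ b ∈ Finset.univ.filter (fun b => G.Adj u b ∧ ¬G.Adj v b ∧ b ≠ v), z b
          = ∑ b ∈ Finset.univ.filter (fun b => G.Adj u b ∧ ¬G.Adj v b ∧ b ≠ v), y b := by
        refine Finset.sum_congr rfl fun b hb => ?_
        rw [Finset.mem_filter] at hb
        obtain ⟨-, hub, -, hbv⟩ := hb
        have hbu : b ≠ u := fun h => G.irrefl (h ▸ hub)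
        rw [hz]
        simp [Equiv.swap_apply_of_ne_of_ne hbu hbv]
      rw [hzv, hzu, hzS] at h1
      have hsplit : ∑ b ∈ Finset.univ.filter (fun b => G.Adj u b ∧ b ≠ v), y b
          = (∑ b ∈ Finset.univ.filter (fun b => G.Adj u b ∧ ¬G.Adj v b ∧ b ≠ v), y b)
            + ∑ b ∈ Finset.univ.filter (fun b => G.Adj u b ∧ G.Adj v b ∧ b ≠ v), y b := by
        rw [← Finset.sum_filter_add_sum_filter_not
          (Finset.univ.filter (fun b => G.Adj u b ∧ b ≠ v)) (fun b => ¬ G.Adj v b) y]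
        congr 1
        · rw [Finset.filter_filter]
          exact Finset.sum_congr (Finset.filter_congr fun b _ => by tauto) fun _ _ => rfl
        · rw [Finset.filter_filter]
          exact Finset.sum_congr (Finset.filter_congr fun b _ => by tauto) fun _ _ => rfl
      have hsub : ∑ b ∈ Finset.univ.filter (fun b => G.Adj u b ∧ G.Adj v b ∧ b ≠ v), y b
          ≤ ∑ b ∈ Finset.univ.filter (fun b => G.Adj v b ∧ b ≠ u), y b := by
        refine Finset.sum_le_sum_of_subset_of_nonneg ?_ fun b _ _ => hy0 b
        intro b hb
        rw [Finset.mem_filter] at hb ⊢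
        obtain ⟨hmem, hub, hvb, hbv⟩ := hb
        exact ⟨hmem, hvb, fun h => G.irrefl (h ▸ hub)⟩
      have hprod : (0:ℝ) ≤ 2 * (y u - y v) *
          ((∑ b ∈ Finset.univ.filter (fun b => G.Adj v b ∧ b ≠ u), y b)
            - ∑ b ∈ Finset.univ.filter (fun b => G.Adj u b ∧ G.Adj v b ∧ b ≠ v), y b) :=
        mul_nonneg (mul_nonneg (by norm_num) (sub_nonneg.mpr hc)) (sub_nonneg.mpr hsub)
      have hcomb : 2 * (y u - y v) *
            ((∑ b ∈ Finset.univ.filter (fun b => G.Adj v b ∧ b ≠ u), y b)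
              - ∑ b ∈ Finset.univ.filter (fun b => G.Adj u b ∧ b ≠ v), y b)
          + 2 * (y u - y v) *
            ∑ b ∈ Finset.univ.filter (fun b => G.Adj u b ∧ ¬G.Adj v b ∧ b ≠ v), y b
        = 2 * (y u - y v) *
            ((∑ b ∈ Finset.univ.filter (fun b => G.Adj v b ∧ b ≠ u), y b)
              - ∑ b ∈ Finset.univ.filter (fun b => G.Adj u b ∧ G.Adj v b ∧ b ≠ v), y b) := by
        rw [hsplit]
        ring
      have hfin : μ * (y ⬝ᵥ y) ≤ lam * (y ⬝ᵥ y) := by linarith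
      exact le_of_mul_le_mul_right hfin hyypos
  have hdeg : ∑ w, ((G.compress u v).degree w : ℝ) = ∑ w, (G.degree w : ℝ) := by
    have h1 := compress_quadform G u v huv (fun _ => (1:ℝ))
    rw [ones_quad, ones_quad] at h1
    norm_num at h1
    exact h1
  have main' : G.lambdaOne ≤ (G.compress u v).lambdaOne := main
  refine ⟨?_, main'⟩
  unfold SimpleGraph.spectralIrregularity
  rw [hdeg]
  exact sub_le_sub_right main' _
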